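/- Let p be a rational number with p ∉ {0, 3/4}, j an integer, and α, β ∈ ℂ² linearly independent with α·α = 2/3, 2 α·β = −2/p + 2j, and 2 α·β + β·β = 0. Then the rank-2 central charge equals −21/2 − 6z − 27/(2(4z − 3)), where 1/z = 1/p − j (assuming 1/p − j ≠ 0 and 4z ≠ 3). -/

import Mathlib

noncomputable def dot2 (x y : Fin 2 → ℂ) : ℂ := x 0 * y 0 + x 1 * y 1

noncomputable def crank2 (α β : Fin 2 → ℂ) : ℂ :=
  2 - 3 * ((4 + dot2 α α * dot2 β β) * dot2 (α - β) (α - β)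
      + 4 * dot2 (α - β) (dot2 α α • β - dot2 β β • α)) /
    (dot2 α α * dot2 β β - (dot2 α β) ^ 2)

theorem case23_regular_central_charge (p : ℚ) (hp0 : p ≠ 0) (hp34 : p ≠ 3/4)
    (j : ℤ) (α β : Fin 2 → ℂ) (hlin : LinearIndependent ℂ ![α, β])
    (haa : dot2 α α = 2/3)
    (hab : 2 * dot2 α β = -2 / (p : ℂ) + 2 * (j : ℂ))
    (hm : 2 * dot2 α β + dot2 β β = 0)
    (z : ℚ) (hz : 1 / z = 1 / p - j) (hne : 1 / p - (j : ℚ) ≠ 0)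
    (h43 : 4 * z ≠ 3) :
    crank2 α β = -21/2 - 6 * (z : ℂ) - 27 / (2 * (4 * (z : ℂ) - 3)) := by
  have hz0 : z ≠ 0 := by
    intro h; apply hne; rw [← hz, h]; simp
  have hzC : (z : ℂ) ≠ 0 := by exact_mod_cast hz0
  have h43C : 4 * (z : ℂ) - 3 ≠ 0 := by
    intro h
    apply h43
    have : (4 * z : ℚ) = (3 : ℚ) := by
      have := sub_eq_zero.mp h
      exact_mod_cast this
    exact this
  have hzC' : (1 : ℂ) / (z : ℂ) = 1 / (p : ℂ) - (j : ℂ) := by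
    exact_mod_cast congrArg (fun q : ℚ => (q : ℂ)) hz
  have ht : dot2 α β = -(1 / (z : ℂ)) := by
    linear_combination hab / 2 + hzC'
  have hbb : dot2 β β = 2 / (z : ℂ) := by
    linear_combination hm - 2 * ht
  -- rewrite crank2 in terms of dot products
  have key : crank2 α β = 2 - 3 * ((4 + dot2 α α * dot2 β β) *
      (dot2 α α - 2 * dot2 α β + dot2 β β)
      + 4 * (dot2 α α * dot2 α β + dot2 β β * dot2 α β - 2 * dot2 α α * dot2 β β)) /
    (dot2 α α * dot2 β β - (dot2 α β) ^ 2) := by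
    unfold crank2 dot2
    simp only [Pi.sub_apply, Pi.smul_apply, smul_eq_mul]
    ring_nf
  rw [key, haa, ht, hbb]
  have hden : (2 : ℂ) / 3 * (2 / (z : ℂ)) - (-(1 / (z : ℂ))) ^ 2 ≠ 0 := by
    have : (2 : ℂ) / 3 * (2 / (z : ℂ)) - (-(1 / (z : ℂ))) ^ 2
        = (4 * (z : ℂ) - 3) / (3 * (z : ℂ) ^ 2) := by
      field_simp; ring
    rw [this]
    exact div_ne_zero h43C (mul_ne_zero three_ne_zero (pow_ne_zero 2 hzC))
  have e1 : (2 : ℂ) / 3 * (2 / (z : ℂ)) - (-(1 / (z : ℂ))) ^ 2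
      = (4 * (z : ℂ) - 3) / (3 * (z : ℂ) ^ 2) := by
    field_simp; ring
  rw [e1]
  rw [div_div_eq_mul_div]
  have e2 : 3 * ((4 + 2 / 3 * (2 / (z:ℂ))) * (2 / 3 - 2 * -(1 / (z:ℂ)) + 2 / (z:ℂ)) +
      4 * (2 / 3 * -(1 / (z:ℂ)) + 2 / (z:ℂ) * -(1 / (z:ℂ)) - 2 * (2 / 3) * (2 / (z:ℂ))))
      * (3 * (z:ℂ) ^ 2) = 24 * (z:ℂ) ^ 2 + 32 * (z:ℂ) - 24 := by
    have h7 : (z:ℂ) ^ 7 * ((z:ℂ)⁻¹) ^ 7 = 1 := by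
      rw [← mul_pow, mul_inv_cancel₀ hzC, one_pow]
    field_simp
    linear_combination
  rw [e2]
  have h43C' : (z:ℂ) * 4 - 3 ≠ 0 := by rwa [mul_comm]
  field_simp
  ring
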